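/- In the group PSL(2,q) with q = 2^l and 2^l − 1 prime, the image t of the unipotent matrix [[1,1],[0,1]] satisfies |t^{PSL(2,q)}| = 2^{2l} − 1. -/

import Mathlib

open Matrix MulAction

section Aux

/-- `SL(2,F)` is equivalent to the kernel of the determinant on `GL(2,F)`. -/
noncomputable def SLEquivKer (F : Type*) [Field F] :
    Matrix.SpecialLinearGroup (Fin 2) F ≃
      (Matrix.GeneralLinearGroup.det (n := Fin 2) (R := F)).ker where
  toFun A := ⟨Matrix.SpecialLinearGroup.toGL A, by
    simpa [MonoidHom.mem_ker] using Matrix.SpecialLinearGroup.coeToGL_det A⟩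
  invFun g := ⟨((g : GL (Fin 2) F) : Matrix (Fin 2) (Fin 2) F), by
    have h := g.2
    rw [MonoidHom.mem_ker] at h
    have h2 := congrArg Units.val h
    rwa [Matrix.GeneralLinearGroup.val_det_apply] at h2⟩
  left_inv A := by ext : 1; rfl
  right_inv g := by ext : 2; rfl

lemma det_surjective (F : Type*) [Field F] :
    Function.Surjective (Matrix.GeneralLinearGroup.det (n := Fin 2) (R := F)) := by
  intro u
  have hmul : Matrix.diagonal ![(u : F), 1] * Matrix.diagonal ![((u⁻¹ : Fˣ) : F), 1] = 1 := by
    ext i j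
    fin_cases i <;> fin_cases j <;> simp [Matrix.diagonal, Matrix.one_apply, Matrix.mul_apply,
      Fin.sum_univ_two]
  have hmul' : Matrix.diagonal ![((u⁻¹ : Fˣ) : F), 1] * Matrix.diagonal ![(u : F), 1] = 1 := by
    ext i j
    fin_cases i <;> fin_cases j <;> simp [Matrix.diagonal, Matrix.one_apply, Matrix.mul_apply,
      Fin.sum_univ_two]
  refine ⟨⟨Matrix.diagonal ![(u : F), 1], Matrix.diagonal ![((u⁻¹ : Fˣ) : F), 1], hmul, hmul'⟩, ?_⟩
  ext
  rw [Matrix.GeneralLinearGroup.val_det_apply]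
  simp [Matrix.det_diagonal, Fin.prod_univ_two]

lemma card_SL_aux (F : Type*) [Field F] [Fintype F] :
    (Fintype.card F - 1) * Nat.card (Matrix.SpecialLinearGroup (Fin 2) F) =
      Nat.card (GL (Fin 2) F) := by
  classical
  rw [Subgroup.card_eq_card_quotient_mul_card_subgroup
    (Matrix.GeneralLinearGroup.det (n := Fin 2) (R := F)).ker]
  congr 1
  · rw [Nat.card_congr (QuotientGroup.quotientKerEquivOfSurjective _ (det_surjective F)).toEquiv]
    rw [Nat.card_eq_fintype_card, Fintype.card_units]
  · exact Nat.card_congr (SLEquivKer F)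

/-- Transfer conjugation orbits along a group isomorphism. -/
def conjOrbitEquiv {G H : Type*} [Group G] [Group H] (e : G ≃* H) (x : G) :
    MulAction.orbit (ConjAct G) x ≃ MulAction.orbit (ConjAct H) (e x) where
  toFun y := ⟨e y, ConjAct.mem_orbit_conjAct.2
    (e.toMonoidHom.map_isConj (ConjAct.mem_orbit_conjAct.1 y.2))⟩
  invFun z := ⟨e.symm z, ConjAct.mem_orbit_conjAct.2 (by
    have h := e.symm.toMonoidHom.map_isConj (ConjAct.mem_orbit_conjAct.1 z.2)
    simpa using h)⟩
  left_inv y := by ext; simp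
  right_inv z := by ext; simp

end Aux

theorem stmt_15 (l : ℕ) (hl : 2 ≤ l) (hprime : Nat.Prime (2 ^ l - 1))
    (A : Matrix.SpecialLinearGroup (Fin 2) (GaloisField 2 l))
    (hA : (A : Matrix (Fin 2) (Fin 2) (GaloisField 2 l)) = !![1, 1; 0, 1]) :
    Nat.card (MulAction.orbit
        (ConjAct (Matrix.ProjectiveSpecialLinearGroup (Fin 2) (GaloisField 2 l)))
        ((A : Matrix.ProjectiveSpecialLinearGroup (Fin 2) (GaloisField 2 l)))) =
      2 ^ (2 * l) - 1 := by
  classical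
  set F := GaloisField 2 l with hF
  letI : Fintype F := Fintype.ofFinite F
  have hl0 : l ≠ 0 := by omega
  have hcardF : Fintype.card F = 2 ^ l := by
    rw [← Nat.card_eq_fintype_card]; exact GaloisField.card 2 l hl0
  have hchar : ∀ x : F, x * x = 1 → x = 1 := by
    intro x hx
    rcases mul_self_eq_one_iff.1 hx with h | h
    · exact h
    · rw [h, CharTwo.neg_eq]
  -- the center of SL(2,F) is trivial
  have hcenter : Subgroup.center (Matrix.SpecialLinearGroup (Fin 2) F) = ⊥ := by
    rw [eq_bot_iff]
    intro x hx
    rw [Matrix.SpecialLinearGroup.mem_center_iff] at hx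
    obtain ⟨r, hr, hs⟩ := hx
    have hr' : r = 1 := hchar r (by
      have h2 : r ^ Fintype.card (Fin 2) = r * r := by rw [Fintype.card_fin]; ring
      rwa [h2] at hr)
    rw [Subgroup.mem_bot]
    ext : 1
    rw [← hs, hr']
    simp
  -- isomorphism PSL ≃* SL
  let e : Matrix.ProjectiveSpecialLinearGroup (Fin 2) F ≃*
      Matrix.SpecialLinearGroup (Fin 2) F :=
    (QuotientGroup.quotientMulEquivOfEq hcenter).trans QuotientGroup.quotientBot
  have he : e ((A : Matrix.ProjectiveSpecialLinearGroup (Fin 2) F)) = A := rfl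
  have horb : Nat.card (MulAction.orbit
      (ConjAct (Matrix.ProjectiveSpecialLinearGroup (Fin 2) F))
      ((A : Matrix.ProjectiveSpecialLinearGroup (Fin 2) F))) =
      Nat.card (MulAction.orbit (ConjAct (Matrix.SpecialLinearGroup (Fin 2) F)) A) := by
    rw [Nat.card_congr (conjOrbitEquiv e _), he]
  rw [horb]
  -- the stabilizer (= centralizer) has cardinality q
  have hstabEquiv : F ≃ MulAction.stabilizer (ConjAct (Matrix.SpecialLinearGroup (Fin 2) F)) A := by
    refine ⟨fun b => ⟨ConjAct.toConjAct (@id (Matrix.SpecialLinearGroup (Fin 2) F)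
        ⟨!![1, b; 0, 1], by simp [Matrix.det_fin_two_of]⟩), ?_⟩,
      fun g => ((ConjAct.ofConjAct g.1 : Matrix.SpecialLinearGroup (Fin 2) F) :
        Matrix (Fin 2) (Fin 2) F) 0 1, ?_, ?_⟩
    · rw [MulAction.mem_stabilizer_iff, ConjAct.smul_def, mul_inv_eq_iff_eq_mul,
        ConjAct.ofConjAct_toConjAct]
      ext : 1
      rw [Matrix.SpecialLinearGroup.coe_mul, Matrix.SpecialLinearGroup.coe_mul, hA]
      simp [Matrix.mul_fin_two, add_comm, id]
    · intro b
      rfl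
    · intro g
      have hmem := g.2
      rw [MulAction.mem_stabilizer_iff, ConjAct.smul_def, mul_inv_eq_iff_eq_mul] at hmem
      set M := ConjAct.ofConjAct g.1 with hM
      have hcomm : (M : Matrix (Fin 2) (Fin 2) F) * (A : Matrix (Fin 2) (Fin 2) F) =
          (A : Matrix (Fin 2) (Fin 2) F) * (M : Matrix (Fin 2) (Fin 2) F) := by
        rw [← Matrix.SpecialLinearGroup.coe_mul, ← Matrix.SpecialLinearGroup.coe_mul, hmem]
      set m := (M : Matrix (Fin 2) (Fin 2) F) with hm
      have h00 : m 0 0 = m 0 0 + m 1 0 := by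
        have h := congrFun (congrFun hcomm 0) 0
        simpa [hA, Matrix.mul_apply, Fin.sum_univ_two] using h
      have hc : m 1 0 = 0 := by
        have h := h00
        rwa [left_eq_add] at h
      have h01 : m 0 0 + m 0 1 = m 0 1 + m 1 1 := by
        have h := congrFun (congrFun hcomm 0) 1
        simpa [hA, Matrix.mul_apply, Fin.sum_univ_two] using h
      have had : m 0 0 = m 1 1 := by
        have h := h01
        rw [add_comm (m 0 0) (m 0 1)] at h
        exact add_left_cancel h
      have hdet : m 0 0 * m 1 1 - m 0 1 * m 1 0 = 1 := by
        have h : Matrix.det m = 1 := M.2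
        rwa [Matrix.det_fin_two] at h
      have ha1 : m 0 0 = 1 := by
        apply hchar
        rw [hc, mul_zero, sub_zero, ← had] at hdet
        exact hdet
      have hmeq : m = !![1, m 0 1; 0, 1] := by
        have h := Matrix.eta_fin_two m
        rw [hc, ← had, ha1] at h
        exact h
      apply Subtype.ext
      show ConjAct.toConjAct _ = g.1
      rw [← ConjAct.toConjAct_ofConjAct g.1]
      congr 1
      apply Subtype.ext
      exact hmeq.symm
  have hstabcard :
      Nat.card (MulAction.stabilizer (ConjAct (Matrix.SpecialLinearGroup (Fin 2) F)) A) =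
        2 ^ l := by
    rw [← Nat.card_congr hstabEquiv, Nat.card_eq_fintype_card, hcardF]
  -- orbit-stabilizer
  have hos := Subgroup.card_eq_card_quotient_mul_card_subgroup
    (MulAction.stabilizer (ConjAct (Matrix.SpecialLinearGroup (Fin 2) F)) A)
  rw [← Nat.card_congr (MulAction.orbitEquivQuotientStabilizer
    (ConjAct (Matrix.SpecialLinearGroup (Fin 2) F)) A)] at hos
  have hconj : Nat.card (ConjAct (Matrix.SpecialLinearGroup (Fin 2) F)) =
      Nat.card (Matrix.SpecialLinearGroup (Fin 2) F) :=
    Nat.card_congr ConjAct.ofConjAct.toEquiv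
  rw [hconj, hstabcard] at hos
  -- cardinality of GL
  have hGL : Nat.card (GL (Fin 2) F) = ((2 ^ l) ^ 2 - 1) * ((2 ^ l) ^ 2 - 2 ^ l) := by
    rw [Matrix.card_GL_field, Fin.prod_univ_two]
    simp [hcardF]
  have hSL := card_SL_aux F
  rw [hcardF, hGL, hos] at hSL
  obtain ⟨m, hm⟩ : ∃ m, 2 ^ l = m + 2 := ⟨2 ^ l - 2, by
    have h2 : 1 < 2 ^ l := Nat.one_lt_two_pow_iff.2 hl0
    omega⟩
  rw [hm] at hSL
  rw [mul_comm 2 l, pow_mul, hm]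
  have e1 : m + 2 - 1 = m + 1 := by omega
  have e2 : (m + 2) ^ 2 - 1 = m ^ 2 + 4 * m + 3 := by
    rw [show (m + 2) ^ 2 = m ^ 2 + 4 * m + 4 from by ring]; omega
  have e3 : (m + 2) ^ 2 - (m + 2) = m ^ 2 + 3 * m + 2 := by
    rw [show (m + 2) ^ 2 = m ^ 2 + 4 * m + 4 from by ring]; omega
  rw [e1, e2, e3] at hSL
  rw [e2]
  apply Nat.eq_of_mul_eq_mul_left (show 0 < (m + 1) * (m + 2) by positivity)
  rw [show (m + 1) * (m + 2) *
      Nat.card (MulAction.orbit (ConjAct (Matrix.SpecialLinearGroup (Fin 2) F)) A) =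
      (m + 1) * (Nat.card (MulAction.orbit (ConjAct (Matrix.SpecialLinearGroup (Fin 2) F)) A) *
        (m + 2)) from by ring, hSL]
  ring
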